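/- In the free monoid C* on the alphabet C = {x, y, e_1, …, e_n}, the relations x^j e_i = x^j = e_{n−i+1} x^j and e_i y^j = y^j = y^j e_{n−i+1}, for all 1 ≤ i ≤ j ≤ n, are consequences of the relations U_2 through U_5. -/
import Mathlib


/-! The alphabet `C = {x, y, e_1, …, e_n}` (with `n + 2` letters), modelled as
`Bool ⊕ Fin n`: `.inl false` is the letter `x`, `.inl true` is the letter `y`,
and `.inr i` is the letter `e_{i+1}`. -/

/-- The free monoid on the alphabet `C = {x, y, e_1, …, e_n}`. -/
abbrev Cw (n : ℕ) := FreeMonoid (Bool ⊕ Fin n)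

/-- The letter `x`. -/
def Cx (n : ℕ) : Cw n := FreeMonoid.of (Sum.inl false)

/-- The letter `y`. -/
def Cy (n : ℕ) : Cw n := FreeMonoid.of (Sum.inl true)

/-- The letter `e_{i+1}` (so `Ce ⟨0,_⟩ = e_1`, …, `Ce ⟨n-1,_⟩ = e_n`). -/
def Ce {n : ℕ} (i : Fin n) : Cw n := FreeMonoid.of (Sum.inr i)

/-- The word `e_1 e_2 ⋯ e_n`. -/
def CeProd (n : ℕ) : Cw n := ((List.finRange n).map Ce).prod

/-- The word `e_2 ⋯ e_n`. -/
def CeProdTail (n : ℕ) : Cw n := (((List.finRange n).drop 1).map Ce).prod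

/-- The relations `U_2` to `U_5` of the paper (in `0`-based indexing of the letters `e`):
`(U_2) xy = e_n` and `yx = e_1`; `(U_3) x e_1 = x` and `e_1 y = y`;
`(U_4) e_i e_j = e_j e_i` for `i < j`; `(U_5) x e_{i+1} = e_i x` for `1 ≤ i ≤ n-1`. -/
inductive Urel2345 (n : ℕ) : Cw n → Cw n → Prop
  | u2a (j : Fin n) : (j : ℕ) = n - 1 → Urel2345 n (Cx n * Cy n) (Ce j)
  | u2b (i : Fin n) : (i : ℕ) = 0 → Urel2345 n (Cy n * Cx n) (Ce i)
  | u3a (i : Fin n) : (i : ℕ) = 0 → Urel2345 n (Cx n * Ce i) (Cx n)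
  | u3b (i : Fin n) : (i : ℕ) = 0 → Urel2345 n (Ce i * Cy n) (Cy n)
  | u4 (i j : Fin n) : i < j → Urel2345 n (Ce i * Ce j) (Ce j * Ce i)
  | u5 (i j : Fin n) : (i : ℕ) + 1 = (j : ℕ) → Urel2345 n (Cx n * Ce j) (Ce i * Cx n)

namespace Urel2345Aux

/-- Abbreviation for the congruence generated by the relations. -/
abbrev cg (n : ℕ) : Con (Cw n) := conGen (Urel2345 n)

variable {n : ℕ}

lemma of {a b : Cw n} (h : Urel2345 n a b) : cg n a b := ConGen.Rel.of _ _ h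

lemma cmul {a b a' b' : Cw n} (h : cg n a b) (h' : cg n a' b') : cg n (a * a') (b * b') :=
  (cg n).mul h h'

lemma cmull (u : Cw n) {a b : Cw n} (h : cg n a b) : cg n (u * a) (u * b) :=
  cmul ((cg n).refl u) h

lemma cmulr (v : Cw n) {a b : Cw n} (h : cg n a b) : cg n (a * v) (b * v) :=
  cmul h ((cg n).refl v)

lemma ctrans {a b c : Cw n} (h : cg n a b) (h' : cg n b c) : cg n a c := (cg n).trans h h'

lemma csymm {a b : Cw n} (h : cg n a b) : cg n b a := (cg n).symm h

lemma xe1 (hn : 1 ≤ n) : cg n (Cx n * Ce ⟨0, hn⟩) (Cx n) := of (.u3a _ rfl)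

lemma e1y (hn : 1 ≤ n) : cg n (Ce ⟨0, hn⟩ * Cy n) (Cy n) := of (.u3b _ rfl)

lemma xy (hn : 1 ≤ n) : cg n (Cx n * Cy n) (Ce ⟨n - 1, by omega⟩) := of (.u2a _ rfl)

lemma yx (hn : 1 ≤ n) : cg n (Cy n * Cx n) (Ce ⟨0, hn⟩) := of (.u2b _ rfl)

lemma u5' {i j : Fin n} (h : (i : ℕ) + 1 = j) : cg n (Cx n * Ce j) (Ce i * Cx n) :=
  of (.u5 _ _ h)

lemma u4' {i j : Fin n} (h : i ≠ j) : cg n (Ce i * Ce j) (Ce j * Ce i) := by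
  rcases lt_or_gt_of_ne h with h | h
  · exact of (.u4 _ _ h)
  · exact csymm (of (.u4 _ _ h))

/-- `e_n x = x`. -/
lemma enx (hn : 1 ≤ n) : cg n (Ce ⟨n - 1, by omega⟩ * Cx n) (Cx n) := by
  refine ctrans (cmulr _ (csymm (xy hn))) (ctrans ?_ (xe1 hn))
  rw [mul_assoc]
  exact cmull _ (yx hn)

/-- `y e_n = y`. -/
lemma yen (hn : 1 ≤ n) : cg n (Cy n * Ce ⟨n - 1, by omega⟩) (Cy n) := by
  refine ctrans (cmull _ (csymm (xy hn))) (ctrans ?_ (e1y hn))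
  rw [← mul_assoc]
  exact cmulr _ (yx hn)

/-- `e_{k+1} y = y e_k e_n` for 1 ≤ k (0-based). -/
lemma key1 (hn : 1 ≤ n) (k : ℕ) (hk1 : 1 ≤ k) (hkn : k < n) :
    cg n (Ce ⟨k, hkn⟩ * Cy n)
      (Cy n * Ce ⟨k - 1, by omega⟩ * Ce ⟨n - 1, by omega⟩) := by
  -- e_k y ~ e_k (e_0 y) ~ (e_0 e_k) y ~ ((yx) e_k) y = y (x e_k) y
  --      ~ y (e_{k-1} x) y = (y e_{k-1}) (x y) ~ y e_{k-1} e_n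
  refine ctrans (cmull _ (csymm (e1y hn))) ?_
  rw [← mul_assoc]
  refine ctrans (cmulr _ (u4' (by simp; omega))) ?_
  refine ctrans (cmulr _ (cmulr _ (csymm (yx hn)))) ?_
  rw [mul_assoc (Cy n) (Cx n)]
  refine ctrans (cmulr _ (cmull _
    (u5' (i := ⟨k - 1, by omega⟩) (j := ⟨k, hkn⟩) (by simp; omega)))) ?_
  rw [← mul_assoc (Cy n), mul_assoc]
  exact cmull _ (xy hn)

/-- `y e_k = e_1 e_{k+1} y` for k ≤ n-2 (0-based). -/
lemma key2 (hn : 1 ≤ n) (k : ℕ) (hk : k + 1 < n) :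
    cg n (Cy n * Ce ⟨k, by omega⟩)
      (Ce ⟨0, hn⟩ * (Ce ⟨k + 1, hk⟩ * Cy n)) := by
  -- y e_k ~ (y e_n) e_k ~ y (e_k e_n) ~ y (e_k (x y)) = y ((e_k x) y)
  --       ~ y ((x e_{k+1}) y) = (y x) (e_{k+1} y) ~ e_1 (e_{k+1} y)
  refine ctrans (cmulr _ (csymm (yen hn))) ?_
  rw [mul_assoc]
  refine ctrans (cmull _ (u4' (by simp; omega))) ?_
  rw [← mul_assoc]
  refine ctrans (cmull _ (csymm (xy hn))) ?_
  rw [← mul_assoc, mul_assoc (Cy n)]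
  refine ctrans (cmulr _ (cmull _
    (csymm (u5' (i := ⟨k, by omega⟩) (j := ⟨k + 1, hk⟩) (by simp))))) ?_
  rw [← mul_assoc (Cy n), mul_assoc (Cy n * Cx n)]
  exact cmulr _ (yx hn)

/-- `x^i e_i = x^i`. -/
lemma L1 (hn : 1 ≤ n) : ∀ i : ℕ, 1 ≤ i → ∀ hin : i ≤ n,
    cg n (Cx n ^ i * Ce ⟨i - 1, by omega⟩) (Cx n ^ i) := by
  intro i h1
  induction i, h1 using Nat.le_induction with
  | base => intro _; simpa using xe1 hn
  | succ i hi ih =>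
    intro hin
    simp only [Nat.add_sub_cancel]
    rw [pow_succ, mul_assoc]
    refine ctrans (cmull _
      (u5' (i := ⟨i - 1, by omega⟩) (j := ⟨i, by omega⟩) (by simp; omega))) ?_
    rw [← mul_assoc]
    exact cmulr _ (ih (by omega))

/-- `e_{n-i+1} x^i = x^i`. -/
lemma L2 (hn : 1 ≤ n) : ∀ i : ℕ, ∀ _h1 : 1 ≤ i, ∀ hin : i ≤ n,
    cg n (Ce ⟨n - i, by omega⟩ * Cx n ^ i) (Cx n ^ i) := by
  intro i h1
  induction i, h1 using Nat.le_induction with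
  | base => intro _; simpa using enx hn
  | succ i hi ih =>
    intro hin
    rw [pow_succ', ← mul_assoc]
    refine ctrans (cmulr _ (csymm
      (u5' (i := ⟨n - (i + 1), by omega⟩) (j := ⟨n - i, by omega⟩) (by simp; omega)))) ?_
    rw [mul_assoc]
    exact cmull _ (ih (by omega))

/-- `e_i y^i = y^i`. -/
lemma L3 (hn : 1 ≤ n) : ∀ i : ℕ, 1 ≤ i → ∀ hin : i ≤ n,
    cg n (Ce ⟨i - 1, by omega⟩ * Cy n ^ i) (Cy n ^ i) := by
  intro i h1
  induction i, h1 using Nat.le_induction with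
  | base => intro _; simpa using e1y hn
  | succ i hi ih =>
    intro hin
    simp only [Nat.add_sub_cancel]
    rw [pow_succ', ← mul_assoc]
    refine ctrans (cmulr _ (key1 hn i hi (by omega))) ?_
    rw [mul_assoc (Cy n)]
    refine ctrans (cmulr _ (cmull _
      (u4' (i := ⟨i - 1, by omega⟩) (j := ⟨n - 1, by omega⟩) (by simp; omega)))) ?_
    rw [mul_assoc, mul_assoc]
    refine ctrans (cmull _ (cmull _ (ih (by omega)))) ?_
    rw [← mul_assoc]
    exact cmulr _ (yen hn)

/-- `y^i e_{n-i+1} = y^i`. -/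
lemma L4 (hn : 1 ≤ n) : ∀ i : ℕ, ∀ _h1 : 1 ≤ i, ∀ hin : i ≤ n,
    cg n (Cy n ^ i * Ce ⟨n - i, by omega⟩) (Cy n ^ i) := by
  intro i h1
  induction i, h1 using Nat.le_induction with
  | base => intro _; simpa using yen hn
  | succ i hi ih =>
    intro hin
    rw [pow_succ, mul_assoc]
    refine ctrans (cmull _ (key2 hn (n - (i + 1)) (by omega))) ?_
    rw [← mul_assoc (Ce ⟨0, hn⟩)]
    refine ctrans (cmull _ (cmulr _
      (u4' (i := ⟨0, hn⟩) (j := ⟨n - (i + 1) + 1, by omega⟩) (by simp)))) ?_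
    rw [mul_assoc (Ce _)]
    refine ctrans (cmull _ (cmull _ (e1y hn))) ?_
    rw [← mul_assoc]
    have ih' : cg n (Cy n ^ i * Ce ⟨n - (i + 1) + 1, by omega⟩) (Cy n ^ i) := by
      have h := ih (by omega)
      have : (⟨n - i, by omega⟩ : Fin n) = ⟨n - (i + 1) + 1, by omega⟩ := by
        ext; simp; omega
      rwa [this] at h
    refine ctrans (cmulr _ ih') ?_
    rw [← pow_succ]
    exact (cg n).refl _

end Urel2345Aux

/-- For `1 ≤ i ≤ j ≤ n`, the relations
`x^j e_i = x^j = e_{n-i+1} x^j` and `e_i y^j = y^j = y^j e_{n-i+1}` are consequences of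
the relations `U_2`–`U_5` (here the letter `e_i` is `Ce ⟨i-1,_⟩` and the letter
`e_{n-i+1}` is `Ce ⟨n-i,_⟩`, in `0`-based indexing). -/
theorem Urel2345.consequence_pow (n : ℕ) (hn : 1 ≤ n) (i j : ℕ) (h1 : 1 ≤ i)
    (h2 : i ≤ j) (h3 : j ≤ n) :
    conGen (Urel2345 n) (Cx n ^ j * Ce ⟨i - 1, by omega⟩) (Cx n ^ j) ∧
    conGen (Urel2345 n) (Ce ⟨n - i, by omega⟩ * Cx n ^ j) (Cx n ^ j) ∧
    conGen (Urel2345 n) (Ce ⟨i - 1, by omega⟩ * Cy n ^ j) (Cy n ^ j) ∧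
    conGen (Urel2345 n) (Cy n ^ j * Ce ⟨n - i, by omega⟩) (Cy n ^ j) := by
  have hL1 := Urel2345Aux.L1 hn i h1 (by omega)
  have hL2 := Urel2345Aux.L2 hn i h1 (by omega)
  have hL3 := Urel2345Aux.L3 hn i h1 (by omega)
  have hL4 := Urel2345Aux.L4 hn i h1 (by omega)
  have ex : Cx n ^ j = Cx n ^ (j - i) * Cx n ^ i := by
    rw [← pow_add]; congr 1; omega
  have ex' : Cx n ^ j = Cx n ^ i * Cx n ^ (j - i) := by
    rw [← pow_add]; congr 1; omega
  have ey : Cy n ^ j = Cy n ^ (j - i) * Cy n ^ i := by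
    rw [← pow_add]; congr 1; omega
  have ey' : Cy n ^ j = Cy n ^ i * Cy n ^ (j - i) := by
    rw [← pow_add]; congr 1; omega
  refine ⟨?_, ?_, ?_, ?_⟩
  · rw [ex, mul_assoc]
    exact Urel2345Aux.cmull _ hL1
  · rw [ex', ← mul_assoc]
    exact Urel2345Aux.cmulr _ hL2
  · rw [ey', ← mul_assoc]
    exact Urel2345Aux.cmulr _ hL3
  · rw [ey, mul_assoc]
    exact Urel2345Aux.cmull _ hL4
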